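/- Let ω = e^{2πi/3} and ζ = e^{2πi/9} in ℂ, and let A = [[0,0,1],[ω,0,0],[0,1,0]], B = [[0,1,0],[0,0,1],[ω,0,0]], C = [[ω+1,0,−ω],[0,0,ω],[ω+1,ω,ω²]] in GL₃(ℂ). Then the assignments a ↦ [A], b ↦ [B], c ↦ [C] of the classes of these matrices in PGL₃(ℂ) extend to a group homomorphism ρ : G₀^{18,18,18} → PGL₃(ℂ), and the range of ρ is infinite. Moreover, with T = [[2ζ⁴+ζ³+ζ−1, 2ζ⁴+ζ³+ζ−1, −ζ⁴+ζ³+ζ+2],[−ζ⁴−2ζ³−2ζ−1, −ζ⁴+ζ³+ζ+2, 2ζ⁴+ζ³+ζ−1],[2ζ⁴+ζ³+ζ−1, 2ζ⁴+ζ³+ζ−1, −ζ⁴−2ζ³−2ζ−1]], the additional assignment t ↦ [T] extends ρ to a group homomorphism into PGL₃(ℂ) from the group presented by generators t, a, b, c and relators t³, a³, b³, c³, (ba)³, (ba⁻¹)³, (cb)³, (cb⁻¹)³, (ac)³, (ac⁻¹)³, t a t⁻¹ b⁻¹, t b t⁻¹ c⁻¹. -/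

import Mathlib

/-- The projective general linear group PGL₃(ℂ). -/
abbrev PGL3C : Type :=
  Matrix.GeneralLinearGroup (Fin 3) ℂ ⧸ Subgroup.center (Matrix.GeneralLinearGroup (Fin 3) ℂ)

/-- The relators of the trivalent triangle group G₀^{18,18,18}:
a³, b³, c³, (ba)³, (ba⁻¹)³, (cb)³, (cb⁻¹)³, (ac)³, (ac⁻¹)³. -/
def g18Rels : Set (FreeGroup (Fin 3)) :=
  let a : FreeGroup (Fin 3) := FreeGroup.of 0
  let b : FreeGroup (Fin 3) := FreeGroup.of 1
  let c : FreeGroup (Fin 3) := FreeGroup.of 2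
  {a ^ 3, b ^ 3, c ^ 3, (b * a) ^ 3, (b * a⁻¹) ^ 3, (c * b) ^ 3, (c * b⁻¹) ^ 3,
   (a * c) ^ 3, (a * c⁻¹) ^ 3}

/-- The relators of the extension G̃₀^{18,18,18} = ⟨t, a, b, c ∣ t³, a³, b³, c³, (ba)³,
(ba⁻¹)³, (cb)³, (cb⁻¹)³, (ac)³, (ac⁻¹)³, tat⁻¹b⁻¹, tbt⁻¹c⁻¹⟩
(generators t, a, b, c are indexed by 0, 1, 2, 3). -/
def g18ExtRels : Set (FreeGroup (Fin 4)) :=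
  let t : FreeGroup (Fin 4) := FreeGroup.of 0
  let a : FreeGroup (Fin 4) := FreeGroup.of 1
  let b : FreeGroup (Fin 4) := FreeGroup.of 2
  let c : FreeGroup (Fin 4) := FreeGroup.of 3
  {t ^ 3, a ^ 3, b ^ 3, c ^ 3, (b * a) ^ 3, (b * a⁻¹) ^ 3, (c * b) ^ 3, (c * b⁻¹) ^ 3,
   (a * c) ^ 3, (a * c⁻¹) ^ 3, t * a * t⁻¹ * b⁻¹, t * b * t⁻¹ * c⁻¹}

noncomputable def ωc : ℂ := Complex.exp (2 * Real.pi * Complex.I / 3)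

noncomputable def ζc : ℂ := Complex.exp (2 * Real.pi * Complex.I / 9)

/-- The matrix A. -/
noncomputable def matA : Matrix (Fin 3) (Fin 3) ℂ :=
  !![0, 0, 1; ωc, 0, 0; 0, 1, 0]

/-- The matrix B. -/
noncomputable def matB : Matrix (Fin 3) (Fin 3) ℂ :=
  !![0, 1, 0; 0, 0, 1; ωc, 0, 0]

/-- The matrix C. -/
noncomputable def matC : Matrix (Fin 3) (Fin 3) ℂ :=
  !![ωc + 1, 0, -ωc; 0, 0, ωc; ωc + 1, ωc, ωc ^ 2]

/-- The matrix T. -/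
noncomputable def matT : Matrix (Fin 3) (Fin 3) ℂ :=
  !![2 * ζc ^ 4 + ζc ^ 3 + ζc - 1, 2 * ζc ^ 4 + ζc ^ 3 + ζc - 1,
       -ζc ^ 4 + ζc ^ 3 + ζc + 2;
     -ζc ^ 4 - 2 * ζc ^ 3 - 2 * ζc - 1, -ζc ^ 4 + ζc ^ 3 + ζc + 2,
       2 * ζc ^ 4 + ζc ^ 3 + ζc - 1;
     2 * ζc ^ 4 + ζc ^ 3 + ζc - 1, 2 * ζc ^ 4 + ζc ^ 3 + ζc - 1,
       -ζc ^ 4 - 2 * ζc ^ 3 - 2 * ζc - 1]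

/- ## Auxiliary basic lemmas -/

lemma omega_eq : ωc = Complex.exp ((2 * Real.pi / 3 : ℝ) * Complex.I) := by
  rw [ωc]; congr 1; push_cast; ring

lemma omega_im_pos : 0 < ωc.im := by
  rw [omega_eq, Complex.exp_ofReal_mul_I_im]
  apply Real.sin_pos_of_pos_of_lt_pi <;> nlinarith [Real.pi_pos]

lemma omega_cube : ωc ^ 3 = 1 := by
  rw [ωc, ← Complex.exp_nat_mul]
  rw [show ((3:ℕ) : ℂ) * (2 * Real.pi * Complex.I / 3) = 2 * Real.pi * Complex.I by
    push_cast; ring]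
  exact Complex.exp_two_pi_mul_I

lemma omega_ne_one : ωc ≠ 1 := by
  intro h
  have := omega_im_pos
  rw [h] at this
  simp at this

lemma hw : ωc ^ 2 + ωc + 1 = 0 := by
  have h3 : (ωc - 1) * (ωc ^ 2 + ωc + 1) = 0 := by linear_combination omega_cube
  rcases mul_eq_zero.mp h3 with h | h
  · exact absurd (by linear_combination h) omega_ne_one
  · exact h

lemma hwz : ωc = ζc ^ 3 := by
  rw [ωc, ζc, ← Complex.exp_nat_mul]; congr 1; push_cast; ring

lemma hz : ζc ^ 6 + ζc ^ 3 + 1 = 0 := by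
  linear_combination hw - (ωc + ζc ^ 3 + 1) * hwz

lemma omega_abs : ‖ωc‖ = 1 := by
  rw [omega_eq, Complex.norm_exp_ofReal_mul_I]

lemma one_add_omega_ne_zero : (1 : ℂ) + ωc ≠ 0 := by
  intro h
  have h2 : (0 : ℂ).im = (1 + ωc).im := by rw [h]
  simp only [Complex.add_im, Complex.one_im, Complex.zero_im] at h2
  have := omega_im_pos
  linarith

/- ## Matrix helpers -/

lemma eq3 {α : Type*} {a b c d e f g h i a' b' c' d' e' f' g' h' i' : α}
    (h1 : a = a') (h2 : b = b') (h3 : c = c') (h4 : d = d') (h5 : e = e')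
    (h6 : f = f') (h7 : g = g') (h8 : h = h') (h9 : i = i') :
    !![a,b,c;d,e,f;g,h,i] = !![a',b',c';d',e',f';g',h',i'] := by
  subst_vars; rfl

lemma smul3 (s a b c d e f g h i : ℂ) :
    s • !![a,b,c;d,e,f;g,h,i] = !![s*a,s*b,s*c;s*d,s*e,s*f;s*g,s*h,s*i] := by
  ext i j; fin_cases i <;> fin_cases j <;> simp

noncomputable def mAi : Matrix (Fin 3) (Fin 3) ℂ := !![(0:ℂ), ((-1) + (-1) * ωc), (0:ℂ); (0:ℂ), (0:ℂ), (1); (1), (0:ℂ), (0:ℂ)]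
noncomputable def mBi : Matrix (Fin 3) (Fin 3) ℂ := !![(0:ℂ), (0:ℂ), ((-1) + (-1) * ωc); (1), (0:ℂ), (0:ℂ); (0:ℂ), (1), (0:ℂ)]
noncomputable def mCi : Matrix (Fin 3) (Fin 3) ℂ := !![((-1) * ωc), ((-1) * ωc), (0:ℂ); (1 + 1 * ωc), (1 * ωc), ((-1) + (-1) * ωc); (0:ℂ), ((-1) + (-1) * ωc), (0:ℂ)]
noncomputable def mTi : Matrix (Fin 3) (Fin 3) ℂ := !![(0:ℂ), (((-1)/9) + ((-1)/9) * ζc + (2/9) * ζc^2 + (1/9) * ζc^3 + ((-2)/9) * ζc^4 + (1/9) * ζc^5), (((-2)/9) + (1/9) * ζc + (1/9) * ζc^2 + ((-1)/9) * ζc^3 + ((-1)/9) * ζc^4 + (2/9) * ζc^5); (((-1)/9) + (2/9) * ζc + ((-1)/9) * ζc^2 + ((-2)/9) * ζc^3 + (1/9) * ζc^4 + (1/9) * ζc^5), ((1/9) + (1/9) * ζc + ((-2)/9) * ζc^2 + ((-1)/9) * ζc^3 + (2/9) * ζc^4 + ((-1)/9) * ζc^5), (0:ℂ); ((1/9) +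 (1/9) * ζc + ((-2)/9) * ζc^2 + ((-1)/9) * ζc^3 + (2/9) * ζc^4 + ((-1)/9) * ζc^5), (0:ℂ), (((-1)/9) + ((-1)/9) * ζc + (2/9) * ζc^2 + (1/9) * ζc^3 + ((-2)/9) * ζc^4 + (1/9) * ζc^5)]
noncomputable def mN : Matrix (Fin 3) (Fin 3) ℂ := !![(1 + 1 * ωc), (1 + 1 * ωc), (0:ℂ); ((-1)), ((-1) + (-1) * ωc), (1); (0:ℂ), ((-1) + (-1) * ωc), (0:ℂ)]
noncomputable def mJ (l : ℂ) : Matrix (Fin 3) (Fin 3) ℂ := !![(1 * l + 1 * ωc), (1 * l + 1 * ωc * l), (1 + 1 * ωc); ((-1) * l), ((-1) + (-1) * l + (-2) * ωc * l), ((-1) + 1 * l + (-1) * ωc); (1 + 1 * ωc), ((-1) * l + 1 * ωc + (-1) * ωc * l), ((-1) * ωc * l)]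

lemma hAAi : matA * mAi = 1 := by
  simp only [matA, mAi, Matrix.mul_fin_three, Matrix.one_fin_three, smul3]
  refine eq3 ?_ ?_ ?_ ?_ ?_ ?_ ?_ ?_ ?_
  · ring1
  · ring1
  · ring1
  · ring1
  · linear_combination (((-1))) * hw
  · ring1
  · ring1
  · ring1
  · ring1

lemma hAiA : mAi * matA = 1 := by
  simp only [matA, mAi, Matrix.mul_fin_three, Matrix.one_fin_three, smul3]
  refine eq3 ?_ ?_ ?_ ?_ ?_ ?_ ?_ ?_ ?_
  · linear_combination (((-1))) * hw
  · ring1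
  · ring1
  · ring1
  · ring1
  · ring1
  · ring1
  · ring1
  · ring1

lemma hBBi : matB * mBi = 1 := by
  simp only [matB, mBi, Matrix.mul_fin_three, Matrix.one_fin_three, smul3]
  refine eq3 ?_ ?_ ?_ ?_ ?_ ?_ ?_ ?_ ?_
  · ring1
  · ring1
  · ring1
  · ring1
  · ring1
  · ring1
  · ring1
  · ring1
  · linear_combination (((-1))) * hw

lemma hBiB : mBi * matB = 1 := by
  simp only [matB, mBi, Matrix.mul_fin_three, Matrix.one_fin_three, smul3]
  refine eq3 ?_ ?_ ?_ ?_ ?_ ?_ ?_ ?_ ?_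
  · linear_combination (((-1))) * hw
  · ring1
  · ring1
  · ring1
  · ring1
  · ring1
  · ring1
  · ring1
  · ring1

lemma hCCi : matC * mCi = 1 := by
  simp only [matC, mCi, Matrix.mul_fin_three, Matrix.one_fin_three, smul3]
  refine eq3 ?_ ?_ ?_ ?_ ?_ ?_ ?_ ?_ ?_
  · linear_combination (((-1))) * hw
  · ring1
  · ring1
  · ring1
  · linear_combination (((-1))) * hw
  · ring1
  · ring1
  · linear_combination (((-1) * ωc)) * hw
  · linear_combination (((-1))) * hw

lemma hCiC : mCi * matC = 1 := by
  simp only [matC, mCi, Matrix.mul_fin_three, Matrix.one_fin_three, smul3]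
  refine eq3 ?_ ?_ ?_ ?_ ?_ ?_ ?_ ?_ ?_
  · linear_combination (((-1))) * hw
  · ring1
  · ring1
  · ring1
  · linear_combination (((-1))) * hw
  · linear_combination (((-1) * ωc)) * hw
  · ring1
  · ring1
  · linear_combination (((-1))) * hw

lemma hTTi : matT * mTi = 1 := by
  simp only [matT, mTi, Matrix.mul_fin_three, Matrix.one_fin_three, smul3]
  refine eq3 ?_ ?_ ?_ ?_ ?_ ?_ ?_ ?_ ?_
  · linear_combination ((((-2)/3) + (1/3) * ζc^3)) * hz
  · ring1
  · linear_combination ((((-2)/3) * ζc + (1/3) * ζc^2 + (1/3) * ζc^3)) * hz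
  · linear_combination ((((-1)/3) + (1/3) * ζc + (1/3) * ζc^2 + ((-1)/3) * ζc^3)) * hz
  · linear_combination ((((-2)/3) + (2/3) * ζc + ((-1)/3) * ζc^2)) * hz
  · linear_combination (((1/3) + (1/3) * ζc + ((-2)/3) * ζc^2)) * hz
  · linear_combination ((((-2)/3) * ζc + (1/3) * ζc^2 + (1/3) * ζc^3)) * hz
  · ring1
  · linear_combination ((((-2)/3) + (1/3) * ζc^3)) * hz

lemma hTiT : mTi * matT = 1 := by
  simp only [matT, mTi, Matrix.mul_fin_three, Matrix.one_fin_three, smul3]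
  refine eq3 ?_ ?_ ?_ ?_ ?_ ?_ ?_ ?_ ?_
  · linear_combination ((((-2)/3) + (1/3) * ζc^3)) * hz
  · linear_combination ((((-2)/3) * ζc + (1/3) * ζc^2 + (1/3) * ζc^3)) * hz
  · linear_combination (((1/3) + (1/3) * ζc + ((-2)/3) * ζc^2)) * hz
  · linear_combination ((((-2)/3) * ζc + (1/3) * ζc^2 + (1/3) * ζc^3)) * hz
  · linear_combination ((((-2)/3) + (1/3) * ζc^3)) * hz
  · linear_combination ((((-1)/3) + (1/3) * ζc + (1/3) * ζc^2 + ((-1)/3) * ζc^3)) * hz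
  · ring1
  · ring1
  · linear_combination ((((-2)/3) + (2/3) * ζc + ((-1)/3) * ζc^2)) * hz

lemma hA3 : matA * matA * matA = ωc • (1 : Matrix (Fin 3) (Fin 3) ℂ) := by
  simp only [matA, Matrix.mul_fin_three, Matrix.one_fin_three, smul3]
  refine eq3 ?_ ?_ ?_ ?_ ?_ ?_ ?_ ?_ ?_
  · ring1
  · ring1
  · ring1
  · ring1
  · ring1
  · ring1
  · ring1
  · ring1
  · ring1

lemma hB3 : matB * matB * matB = ωc • (1 : Matrix (Fin 3) (Fin 3) ℂ) := by
  simp only [matB, Matrix.mul_fin_three, Matrix.one_fin_three, smul3]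
  refine eq3 ?_ ?_ ?_ ?_ ?_ ?_ ?_ ?_ ?_
  · ring1
  · ring1
  · ring1
  · ring1
  · ring1
  · ring1
  · ring1
  · ring1
  · ring1

lemma hC3 : matC * matC * matC = ωc • (1 : Matrix (Fin 3) (Fin 3) ℂ) := by
  simp only [matC, Matrix.mul_fin_three, Matrix.one_fin_three, smul3]
  refine eq3 ?_ ?_ ?_ ?_ ?_ ?_ ?_ ?_ ?_
  · linear_combination ((1 + (-1) * ωc + (-1) * ωc^2)) * hw
  · linear_combination (((-1) * ωc^2)) * hw
  · linear_combination (((-1) * ωc + (-1) * ωc^3)) * hw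
  · linear_combination ((1 * ωc + 1 * ωc^2)) * hw
  · linear_combination (((-1) * ωc + 1 * ωc^2)) * hw
  · linear_combination (((-1) * ωc^2 + 1 * ωc^3)) * hw
  · linear_combination ((1 + 1 * ωc + 1 * ωc^2 + 1 * ωc^3)) * hw
  · linear_combination (((-1) * ωc^2 + 1 * ωc^3)) * hw
  · linear_combination (((-2) * ωc + (-1) * ωc^3 + 1 * ωc^4)) * hw

lemma hT3 : matT * matT * matT = (27 + 54 * ζc + 27 * ζc^2 + 27 * ζc^3 + 27 * ζc^4 + (-27) * ζc^5) • (1 : Matrix (Fin 3) (Fin 3) ℂ) := by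
  simp only [matT, Matrix.mul_fin_three, Matrix.one_fin_three, smul3]
  refine eq3 ?_ ?_ ?_ ?_ ?_ ?_ ?_ ?_ ?_
  · linear_combination (((-21) + (-45) * ζc + (-36) * ζc^2 + (-3) * ζc^3 + (-9) * ζc^4 + 9 * ζc^5 + 6 * ζc^6)) * hz
  · linear_combination (((-3) + 6 * ζc^3 + 9 * ζc^4 + 9 * ζc^5 + 6 * ζc^6)) * hz
  · linear_combination ((6 + 9 * ζc + 9 * ζc^2 + 6 * ζc^3 + (-3) * ζc^6)) * hz
  · linear_combination (((-3) + (-9) * ζc + (-9) * ζc^2 + (-12) * ζc^3 + (-9) * ζc^4 + (-9) * ζc^5 + (-3) * ζc^6)) * hz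
  · linear_combination (((-12) + (-36) * ζc + (-27) * ζc^2 + (-3) * ζc^3 + (-18) * ζc^4 + (-3) * ζc^6)) * hz
  · linear_combination (((-3) + 6 * ζc^3 + 9 * ζc^4 + 9 * ζc^5 + 6 * ζc^6)) * hz
  · linear_combination (((-3) + 6 * ζc^3 + 9 * ζc^4 + 9 * ζc^5 + 6 * ζc^6)) * hz
  · linear_combination (((-3) + 6 * ζc^3 + 9 * ζc^4 + 9 * ζc^5 + 6 * ζc^6)) * hz
  · linear_combination (((-21) + (-54) * ζc + (-45) * ζc^2 + (-21) * ζc^3 + (-27) * ζc^4 + (-9) * ζc^5 + (-3) * ζc^6)) * hz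

lemma hBA3 : (matB * matA) * (matB * matA) * (matB * matA) = 1 := by
  simp only [matA, matB, matC, mAi, mBi, mCi, Matrix.mul_fin_three, Matrix.one_fin_three, smul3]
  refine eq3 ?_ ?_ ?_ ?_ ?_ ?_ ?_ ?_ ?_
  · linear_combination (((-1) + 1 * ωc)) * hw
  · ring1
  · ring1
  · ring1
  · ring1
  · ring1
  · ring1
  · ring1
  · linear_combination (((-1) + 1 * ωc)) * hw

lemma hBAi3 : (matB * mAi) * (matB * mAi) * (matB * mAi) = 1 := by
  simp only [matA, matB, matC, mAi, mBi, mCi, Matrix.mul_fin_three, Matrix.one_fin_three, smul3]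
  refine eq3 ?_ ?_ ?_ ?_ ?_ ?_ ?_ ?_ ?_
  · linear_combination (((-1))) * hw
  · ring1
  · ring1
  · ring1
  · linear_combination (((-1))) * hw
  · ring1
  · ring1
  · ring1
  · linear_combination (((-1))) * hw

lemma hCB3 : (matC * matB) * (matC * matB) * (matC * matB) = 1 := by
  simp only [matA, matB, matC, mAi, mBi, mCi, Matrix.mul_fin_three, Matrix.one_fin_three, smul3]
  refine eq3 ?_ ?_ ?_ ?_ ?_ ?_ ?_ ?_ ?_
  · linear_combination (((-1) + 1 * ωc + (-1) * ωc^3 + (-1) * ωc^4)) * hw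
  · linear_combination ((1 * ωc^2 + 1 * ωc^3)) * hw
  · ring1
  · linear_combination ((1 * ωc^4)) * hw
  · linear_combination (((-1) + 1 * ωc + (-1) * ωc^3)) * hw
  · ring1
  · linear_combination ((1 * ωc^3 + (-1) * ωc^4 + 1 * ωc^5)) * hw
  · linear_combination ((2 * ωc^2 + 1 * ωc^3 + (-1) * ωc^4)) * hw
  · linear_combination (((-1) + 1 * ωc)) * hw

lemma hCBi3 : (matC * mBi) * (matC * mBi) * (matC * mBi) = 1 := by
  simp only [matA, matB, matC, mAi, mBi, mCi, Matrix.mul_fin_three, Matrix.one_fin_three, smul3]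
  refine eq3 ?_ ?_ ?_ ?_ ?_ ?_ ?_ ?_ ?_
  · linear_combination (((-1) + 2 * ωc + 3 * ωc^2 + 1 * ωc^3)) * hw
  · linear_combination ((2 * ωc^2 + 2 * ωc^3 + 1 * ωc^4)) * hw
  · linear_combination (((-1) + (-4) * ωc + (-6) * ωc^2 + (-4) * ωc^3 + (-1) * ωc^4)) * hw
  · ring1
  · linear_combination (((-1) + 1 * ωc)) * hw
  · ring1
  · linear_combination ((1 * ωc + 2 * ωc^2 + 1 * ωc^3)) * hw
  · linear_combination ((2 * ωc^2 + 1 * ωc^3 + 1 * ωc^4)) * hw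
  · linear_combination (((-2) + (-2) * ωc + (-3) * ωc^2 + (-3) * ωc^3 + (-1) * ωc^4)) * hw

lemma hAC3 : (matA * matC) * (matA * matC) * (matA * matC) = 1 := by
  simp only [matA, matB, matC, mAi, mBi, mCi, Matrix.mul_fin_three, Matrix.one_fin_three, smul3]
  refine eq3 ?_ ?_ ?_ ?_ ?_ ?_ ?_ ?_ ?_
  · linear_combination ((3 * ωc + 2 * ωc^2)) * hw
  · linear_combination ((1 * ωc + 1 * ωc^2)) * hw
  · linear_combination ((1 * ωc^2 + 1 * ωc^3)) * hw
  · linear_combination ((1 * ωc + 2 * ωc^2 + 1 * ωc^3)) * hw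
  · linear_combination (((-1) + 1 * ωc + 1 * ωc^2)) * hw
  · linear_combination ((1 * ωc^3)) * hw
  · ring1
  · ring1
  · linear_combination (((-1) + 1 * ωc)) * hw

lemma hACi3 : (matA * mCi) * (matA * mCi) * (matA * mCi) = 1 := by
  simp only [matA, matB, matC, mAi, mBi, mCi, Matrix.mul_fin_three, Matrix.one_fin_three, smul3]
  refine eq3 ?_ ?_ ?_ ?_ ?_ ?_ ?_ ?_ ?_
  · linear_combination (((-1) + 1 * ωc + (-1) * ωc^3)) * hw
  · linear_combination (((-1) * ωc^2 + (-1) * ωc^3)) * hw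
  · ring1
  · linear_combination (((-1) * ωc^4)) * hw
  · linear_combination (((-1) + 1 * ωc + (-1) * ωc^3 + (-1) * ωc^4)) * hw
  · ring1
  · linear_combination ((1 + 2 * ωc + 1 * ωc^2 + 1 * ωc^3)) * hw
  · linear_combination ((1 + 3 * ωc + 2 * ωc^2 + 1 * ωc^3)) * hw
  · linear_combination (((-2) + (-1) * ωc)) * hw

lemma hTA : matT * matA = matB * matT := by
  simp only [matT, matA, matB, Matrix.mul_fin_three, Matrix.one_fin_three, smul3]
  refine eq3 ?_ ?_ ?_ ?_ ?_ ?_ ?_ ?_ ?_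
  · linear_combination (((-1) + 1 * ζc + 1 * ζc^3 + 2 * ζc^4)) * hwz + ((1 + 2 * ζc)) * hz
  · ring1
  · ring1
  · linear_combination ((2 + 1 * ζc + 1 * ζc^3 + (-1) * ζc^4)) * hwz + ((1 + (-1) * ζc)) * hz
  · ring1
  · ring1
  · ring1
  · linear_combination ((1 + (-1) * ζc + (-1) * ζc^3 + (-2) * ζc^4)) * hwz + (((-1) + (-2) * ζc)) * hz
  · linear_combination (((-2) + (-1) * ζc + (-1) * ζc^3 + 1 * ζc^4)) * hwz + (((-1) + 1 * ζc)) * hz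

lemma hTB : matT * matB = matC * matT := by
  simp only [matT, matB, matC, Matrix.mul_fin_three, Matrix.one_fin_three, smul3]
  refine eq3 ?_ ?_ ?_ ?_ ?_ ?_ ?_ ?_ ?_
  · linear_combination ((2 + 1 * ζc + 1 * ζc^3 + (-1) * ζc^4)) * hwz + ((1 + (-1) * ζc)) * hz
  · ring1
  · linear_combination (((-3) + (-3) * ζc + (-3) * ζc^3)) * hwz + (((-3))) * hz
  · ring1
  · linear_combination ((1 + (-1) * ζc + (-1) * ζc^3 + (-2) * ζc^4)) * hwz + (((-1) + (-2) * ζc)) * hz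
  · linear_combination ((1 + 2 * ζc + 2 * ζc^3 + 1 * ζc^4)) * hwz + ((2 + 1 * ζc)) * hz
  · linear_combination ((1 + (-1) * ζc + (-3) * ζc^4 + (-1) * ζc^6 + (-2) * ζc^7 + 1 * ωc + (-1) * ωc * ζc + (-1) * ωc * ζc^3 + (-2) * ωc * ζc^4)) * hwz + ((1 + (-1) * ζc + (-1) * ζc^3 + (-2) * ζc^4)) * hz
  · linear_combination (((-1) + (-2) * ζc + (-1) * ζc^3 + (-2) * ζc^4 + (-1) * ζc^6 + (-2) * ζc^7 + 1 * ωc + (-1) * ωc * ζc + (-1) * ωc * ζc^3 + (-2) * ωc * ζc^4)) * hwz + (((-1) * ζc^3 + (-2) * ζc^4)) * hz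
  · linear_combination (((-1) + (-2) * ζc + (-1) * ζc^3 + 1 * ζc^4 + 2 * ζc^6 + 1 * ζc^7 + 1 * ωc + 2 * ωc * ζc + 2 * ωc * ζc^3 + 1 * ωc * ζc^4)) * hwz + (((-3) + 2 * ζc^3 + 1 * ζc^4)) * hz

lemma hNval : matA * matB * mCi = mN := by
  simp only [matA, matB, mCi, mN, Matrix.mul_fin_three, Matrix.one_fin_three, smul3]
  refine eq3 ?_ ?_ ?_ ?_ ?_ ?_ ?_ ?_ ?_
  · linear_combination (((-1))) * hw
  · linear_combination (((-1))) * hw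
  · ring1
  · linear_combination ((1)) * hw
  · linear_combination ((1)) * hw
  · linear_combination (((-1))) * hw
  · ring1
  · ring1
  · ring1

lemma key (l : ℂ) (hl : l^2 + ωc*l + 1 = 0) : mN * mJ l = l • mJ l := by
  simp only [mN, mJ, Matrix.mul_fin_three, Matrix.one_fin_three, smul3]
  refine eq3 ?_ ?_ ?_ ?_ ?_ ?_ ?_ ?_ ?_
  · linear_combination (((-1))) * hl + ((1)) * hw
  · linear_combination (((-1) + (-1) * ωc)) * hl
  · ring1
  · linear_combination ((1)) * hl
  · linear_combination ((1 + 2 * ωc)) * hl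
  · linear_combination (((-1))) * hl + ((1)) * hw
  · ring1
  · linear_combination ((1 + 1 * ωc)) * hl + ((1 * l)) * hw
  · linear_combination ((1 * ωc)) * hl + ((1 + (-1) * l)) * hw

lemma hdetN : mN.det = ωc := by
  simp [mN, Matrix.det_fin_three, Matrix.vecHead, Matrix.vecTail]
  linear_combination ((1)) * hw


/- ## Group-theoretic helpers -/

lemma pow3M (M : Matrix (Fin 3) (Fin 3) ℂ) : M ^ 3 = M * M * M := by
  rw [pow_succ, pow_succ, pow_one]

lemma central_of_scalar (u : Matrix.GeneralLinearGroup (Fin 3) ℂ) (s : ℂ)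
    (h : (u : Matrix (Fin 3) (Fin 3) ℂ) = s • 1) :
    u ∈ Subgroup.center (Matrix.GeneralLinearGroup (Fin 3) ℂ) := by
  rw [Subgroup.mem_center_iff]
  intro g
  ext1
  simp only [Units.val_mul, h, Matrix.smul_mul, Matrix.mul_smul, Matrix.one_mul, Matrix.mul_one]

lemma mk_cube_eq_one (u : Matrix.GeneralLinearGroup (Fin 3) ℂ) (s : ℂ)
    (h : (u : Matrix (Fin 3) (Fin 3) ℂ) * u * u = s • 1) :
    ((QuotientGroup.mk u : PGL3C)) ^ 3 = 1 := by
  rw [← QuotientGroup.mk_pow]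
  refine (QuotientGroup.eq_one_iff _).mpr (central_of_scalar _ s ?_)
  have hv : ((u ^ 3 : Matrix.GeneralLinearGroup (Fin 3) ℂ) : Matrix (Fin 3) (Fin 3) ℂ)
      = ((u : Matrix (Fin 3) (Fin 3) ℂ)) ^ 3 := Units.val_pow_eq_pow_val u 3
  rw [hv, pow3M]; exact h

lemma scalar_of_comm (M : Matrix (Fin 3) (Fin 3) ℂ)
    (h01 : !![1,1,0;0,1,0;0,0,1] * M = M * !![1,1,0;0,1,0;0,0,1])
    (h10 : !![1,0,0;1,1,0;0,0,1] * M = M * !![1,0,0;1,1,0;0,0,1])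
    (h02 : !![1,0,1;0,1,0;0,0,1] * M = M * !![1,0,1;0,1,0;0,0,1]) :
    M = (M 0 0) • 1 := by
  have e : ∀ (E : Matrix (Fin 3) (Fin 3) ℂ), E * M = M * E → ∀ i j,
      (E * M) i j = (M * E) i j := fun E hE i j => by rw [hE]
  have q1 := e _ h01 0 0
  have q2 := e _ h01 0 1
  have q3 := e _ h01 0 2
  have q4 := e _ h01 2 1
  have q5 := e _ h10 1 1
  have q6 := e _ h10 1 2
  have q7 := e _ h10 2 0
  have q8 := e _ h02 0 2
  simp [Matrix.mul_apply, Fin.sum_univ_three, Matrix.vecHead, Matrix.vecTail]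
    at q1 q2 q3 q4 q5 q6 q7 q8
  ext i j
  fin_cases i <;> fin_cases j <;>
    simp only [Matrix.smul_apply, Matrix.one_apply, smul_eq_mul, Fin.mk_one, Fin.zero_eta,
      Fin.reduceFinMk, ne_eq, Fin.reduceEq, not_false_eq_true, if_true, if_false,
      ite_true, ite_false, reduceIte, mul_one, mul_zero]
  · linear_combination q5
  · linear_combination q6
  · linear_combination q1
  · linear_combination q2
  · linear_combination q3
  · linear_combination q4
  · linear_combination q7
  · linear_combination q8

/- ## The units -/

noncomputable def glA : Matrix.GeneralLinearGroup (Fin 3) ℂ := ⟨matA, mAi, hAAi, hAiA⟩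
noncomputable def glB : Matrix.GeneralLinearGroup (Fin 3) ℂ := ⟨matB, mBi, hBBi, hBiB⟩
noncomputable def glC : Matrix.GeneralLinearGroup (Fin 3) ℂ := ⟨matC, mCi, hCCi, hCiC⟩
noncomputable def glT : Matrix.GeneralLinearGroup (Fin 3) ℂ := ⟨matT, mTi, hTTi, hTiT⟩

noncomputable def tv01 : Matrix.GeneralLinearGroup (Fin 3) ℂ :=
  ⟨!![1,1,0;0,1,0;0,0,1], !![1,-1,0;0,1,0;0,0,1], by
    ext i j; fin_cases i <;> fin_cases j <;> simp [Matrix.mul_apply, Fin.sum_univ_three, Matrix.vecHead, Matrix.vecTail], by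
    ext i j; fin_cases i <;> fin_cases j <;> simp [Matrix.mul_apply, Fin.sum_univ_three, Matrix.vecHead, Matrix.vecTail]⟩
noncomputable def tv10 : Matrix.GeneralLinearGroup (Fin 3) ℂ :=
  ⟨!![1,0,0;1,1,0;0,0,1], !![1,0,0;-1,1,0;0,0,1], by
    ext i j; fin_cases i <;> fin_cases j <;> simp [Matrix.mul_apply, Fin.sum_univ_three, Matrix.vecHead, Matrix.vecTail], by
    ext i j; fin_cases i <;> fin_cases j <;> simp [Matrix.mul_apply, Fin.sum_univ_three, Matrix.vecHead, Matrix.vecTail]⟩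
noncomputable def tv02 : Matrix.GeneralLinearGroup (Fin 3) ℂ :=
  ⟨!![1,0,1;0,1,0;0,0,1], !![1,0,-1;0,1,0;0,0,1], by
    ext i j; fin_cases i <;> fin_cases j <;> simp [Matrix.mul_apply, Fin.sum_univ_three, Matrix.vecHead, Matrix.vecTail], by
    ext i j; fin_cases i <;> fin_cases j <;> simp [Matrix.mul_apply, Fin.sum_univ_three, Matrix.vecHead, Matrix.vecTail]⟩

/- ## The element of infinite order -/

lemma mkN_pow_ne_one (n : ℕ) (hn : 0 < n)
    (h : ((QuotientGroup.mk (glA * glB * glC⁻¹) : PGL3C)) ^ n = 1) : False := by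
  rw [← QuotientGroup.mk_pow] at h
  have hc := (QuotientGroup.eq_one_iff _).mp h
  -- the underlying matrix of (glA * glB * glC⁻¹) ^ n is mN ^ n
  have hval : (((glA * glB * glC⁻¹) ^ n : Matrix.GeneralLinearGroup (Fin 3) ℂ) :
      Matrix (Fin 3) (Fin 3) ℂ) = mN ^ n := by
    rw [Units.val_pow_eq_pow_val]
    congr 1
    show matA * matB * mCi = mN
    exact hNval
  -- commutation with the three transvections
  have hcomm : ∀ g : Matrix.GeneralLinearGroup (Fin 3) ℂ,
      (g : Matrix (Fin 3) (Fin 3) ℂ) * (mN ^ n) = (mN ^ n) * g := by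
    intro g
    have := (Subgroup.mem_center_iff.mp hc) g
    have hval2 := congrArg (Units.val) this
    simpa only [Units.val_mul, hval] using hval2
  have hM : mN ^ n = ((mN ^ n) 0 0) • 1 :=
    scalar_of_comm _ (hcomm tv01) (hcomm tv10) (hcomm tv02)
  set s : ℂ := (mN ^ n) 0 0 with hs
  -- determinant gives |s| = 1
  have hdet : s ^ 3 = ωc ^ n := by
    have := congrArg Matrix.det hM
    rw [Matrix.det_pow, hdetN, Matrix.det_smul, Matrix.det_one, Fintype.card_fin] at this
    linear_combination -this
  have habs_s : ‖s‖ = 1 := by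
    have h1 : (‖s‖) ^ 3 = 1 := by
      have := congrArg norm hdet
      rwa [norm_pow, norm_pow, omega_abs, one_pow] at this
    rw [← one_pow 3] at h1
    exact (pow_left_inj₀ (norm_nonneg s) zero_le_one (by norm_num : (3:ℕ) ≠ 0)).mp h1
  -- an eigenvalue of the quadratic factor
  obtain ⟨d, hd⟩ := IsAlgClosed.exists_pow_nat_eq (ωc ^ 2 - 4) (n := 2) (by norm_num)
  set l : ℂ := (-ωc + d) / 2 with hldef
  have hl : l ^ 2 + ωc * l + 1 = 0 := by
    rw [hldef]; linear_combination (1/4 : ℂ) * hd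
  -- mN ^ k * mJ l = l ^ k • mJ l
  have hJn : ∀ k : ℕ, mN ^ k * mJ l = (l ^ k) • mJ l := by
    intro k
    induction k with
    | zero => simp
    | succ k ih =>
        rw [pow_succ', mul_assoc, ih, mul_smul_comm, key l hl, smul_smul, pow_succ']
        ring_nf
  have hkey := hJn n
  rw [hM, Matrix.smul_mul, Matrix.one_mul] at hkey
  -- compare entries at (0,2)
  have h02 : s * (mJ l 0 2) = l ^ n * (mJ l 0 2) := by
    rw [show s * (mJ l 0 2) = (s • mJ l) 0 2 by simp,
      show l ^ n * (mJ l 0 2) = ((l ^ n) • mJ l) 0 2 by simp, hkey]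
  have hJ02 : mJ l 0 2 = 1 + ωc := by simp [mJ]
  have hsl : s = l ^ n := by
    rw [hJ02] at h02
    exact mul_right_cancel₀ one_add_omega_ne_zero h02
  -- |l| = 1
  have habs_l : ‖l‖ = 1 := by
    have h1 : (‖l‖) ^ n = 1 := by
      have := congrArg norm hsl.symm
      rwa [norm_pow, habs_s] at this
    rw [← one_pow n] at h1
    exact (pow_left_inj₀ (norm_nonneg l) zero_le_one hn.ne').mp h1
  -- l ≠ 0 and conj l = l⁻¹, so ωc is real: contradiction
  have hl0 : l ≠ 0 := by
    intro h0
    rw [h0] at hl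
    simp at hl
  have hnsq : Complex.normSq l = 1 := by
    rw [← Complex.sq_norm, habs_l]; norm_num
  have hlc : l * (starRingEnd ℂ) l = 1 := by
    rw [Complex.mul_conj, hnsq]; norm_num
  have hwre : ωc = -(l + (starRingEnd ℂ) l) := by
    linear_combination ((starRingEnd ℂ) l) * hl - (l + ωc) * hlc
  have : ωc.im = 0 := by
    rw [hwre]
    simp [Complex.add_im, Complex.conj_im]
  have := omega_im_pos
  linarith

/-- The assignments a ↦ [A], b ↦ [B], c ↦ [C] extend to a homomorphism
ρ : G₀^{18,18,18} → PGL₃(ℂ) with infinite image; moreover the additional assignment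
t ↦ [T] extends ρ to a homomorphism of the extended group G̃₀^{18,18,18} into PGL₃(ℂ). -/
theorem g18_rep_PGL3 :
    ∃ A' B' C' T' : Matrix.GeneralLinearGroup (Fin 3) ℂ,
      (↑A' : Matrix (Fin 3) (Fin 3) ℂ) = matA ∧
      (↑B' : Matrix (Fin 3) (Fin 3) ℂ) = matB ∧
      (↑C' : Matrix (Fin 3) (Fin 3) ℂ) = matC ∧
      (↑T' : Matrix (Fin 3) (Fin 3) ℂ) = matT ∧
      (∃ ρ : PresentedGroup g18Rels →* PGL3C,
        ρ (PresentedGroup.of 0) = QuotientGroup.mk A' ∧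
        ρ (PresentedGroup.of 1) = QuotientGroup.mk B' ∧
        ρ (PresentedGroup.of 2) = QuotientGroup.mk C' ∧
        Set.Infinite (Set.range ρ)) ∧
      (∃ ρ' : PresentedGroup g18ExtRels →* PGL3C,
        ρ' (PresentedGroup.of 0) = QuotientGroup.mk T' ∧
        ρ' (PresentedGroup.of 1) = QuotientGroup.mk A' ∧
        ρ' (PresentedGroup.of 2) = QuotientGroup.mk B' ∧
        ρ' (PresentedGroup.of 3) = QuotientGroup.mk C') := by
  refine ⟨glA, glB, glC, glT, rfl, rfl, rfl, rfl, ?_, ?_⟩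
  · -- the homomorphism ρ on G₀
    have hrel : ∀ r ∈ g18Rels, FreeGroup.lift
        (![QuotientGroup.mk glA, QuotientGroup.mk glB, QuotientGroup.mk glC] :
          Fin 3 → PGL3C) r = 1 := by
      intro r hr
      simp only [g18Rels, Set.mem_insert_iff, Set.mem_singleton_iff] at hr
      rcases hr with rfl | rfl | rfl | rfl | rfl | rfl | rfl | rfl | rfl <;>
        simp only [map_pow, map_mul, map_inv, FreeGroup.lift_apply_of, Matrix.cons_val_zero,
          Matrix.cons_val_one, Matrix.head_cons, Matrix.cons_val_two, Matrix.tail_cons]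
      · exact mk_cube_eq_one glA ωc hA3
      · exact mk_cube_eq_one glB ωc hB3
      · exact mk_cube_eq_one glC ωc hC3
      · exact mk_cube_eq_one (glB * glA) 1 (by rw [one_smul]; exact hBA3)
      · exact mk_cube_eq_one (glB * glA⁻¹) 1 (by rw [one_smul]; exact hBAi3)
      · exact mk_cube_eq_one (glC * glB) 1 (by rw [one_smul]; exact hCB3)
      · exact mk_cube_eq_one (glC * glB⁻¹) 1 (by rw [one_smul]; exact hCBi3)
      · exact mk_cube_eq_one (glA * glC) 1 (by rw [one_smul]; exact hAC3)
      · exact mk_cube_eq_one (glA * glC⁻¹) 1 (by rw [one_smul]; exact hACi3)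
    refine ⟨PresentedGroup.toGroup hrel, ?_, ?_, ?_, ?_⟩
    · simpa using PresentedGroup.toGroup.of hrel (x := 0)
    · simpa using PresentedGroup.toGroup.of hrel (x := 1)
    · simpa using PresentedGroup.toGroup.of hrel (x := 2)
    · -- infinite range
      set ρ := PresentedGroup.toGroup hrel with hρ
      have h0 : ρ (PresentedGroup.of 0) = QuotientGroup.mk glA := by
        rw [hρ]; simp
      have h1 : ρ (PresentedGroup.of 1) = QuotientGroup.mk glB := by
        rw [hρ]; simp
      have h2 : ρ (PresentedGroup.of 2) = QuotientGroup.mk glC := by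
        rw [hρ]; simp
      set g0 : PresentedGroup g18Rels :=
        PresentedGroup.of 0 * PresentedGroup.of 1 * (PresentedGroup.of 2)⁻¹ with hg0
      have hxg : ρ g0 = QuotientGroup.mk (glA * glB * glC⁻¹) := by
        rw [hg0, map_mul, map_mul, map_inv, h0, h1, h2]
        rfl
      apply Set.infinite_of_injective_forall_mem (f := fun n : ℕ => ρ (g0 ^ n))
      · -- injective
        have heq : (fun n : ℕ => ρ (g0 ^ n)) =
            fun n : ℕ => (QuotientGroup.mk (glA * glB * glC⁻¹) : PGL3C) ^ n := by
          funext n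
          rw [map_pow, hxg]
        rw [heq]
        apply injective_pow_iff_not_isOfFinOrder.mpr
        rw [isOfFinOrder_iff_pow_eq_one]
        rintro ⟨k, hk, hke⟩
        exact mkN_pow_ne_one k hk hke
      · intro n
        exact ⟨g0 ^ n, rfl⟩
  · -- the homomorphism ρ' on the extension
    have hrel : ∀ r ∈ g18ExtRels, FreeGroup.lift
        (![QuotientGroup.mk glT, QuotientGroup.mk glA, QuotientGroup.mk glB,
           QuotientGroup.mk glC] : Fin 4 → PGL3C) r = 1 := by
      intro r hr
      simp only [g18ExtRels, Set.mem_insert_iff, Set.mem_singleton_iff] at hr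
      rcases hr with rfl | rfl | rfl | rfl | rfl | rfl | rfl | rfl | rfl | rfl | rfl | rfl <;>
        simp only [map_pow, map_mul, map_inv, FreeGroup.lift_apply_of, Matrix.cons_val_zero,
          Matrix.cons_val_one, Matrix.head_cons, Matrix.cons_val_two, Matrix.tail_cons,
          Matrix.cons_val_three]
      · exact mk_cube_eq_one glT
          (27 + 54 * ζc + 27 * ζc^2 + 27 * ζc^3 + 27 * ζc^4 + (-27) * ζc^5) hT3
      · exact mk_cube_eq_one glA ωc hA3
      · exact mk_cube_eq_one glB ωc hB3
      · exact mk_cube_eq_one glC ωc hC3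
      · exact mk_cube_eq_one (glB * glA) 1 (by rw [one_smul]; exact hBA3)
      · exact mk_cube_eq_one (glB * glA⁻¹) 1 (by rw [one_smul]; exact hBAi3)
      · exact mk_cube_eq_one (glC * glB) 1 (by rw [one_smul]; exact hCB3)
      · exact mk_cube_eq_one (glC * glB⁻¹) 1 (by rw [one_smul]; exact hCBi3)
      · exact mk_cube_eq_one (glA * glC) 1 (by rw [one_smul]; exact hAC3)
      · exact mk_cube_eq_one (glA * glC⁻¹) 1 (by rw [one_smul]; exact hACi3)
      · -- t a t⁻¹ b⁻¹
        have hu : glT * glA = glB * glT :=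
          Units.ext (show ((glT * glA : Matrix.GeneralLinearGroup (Fin 3) ℂ) :
            Matrix (Fin 3) (Fin 3) ℂ) = ((glB * glT : Matrix.GeneralLinearGroup (Fin 3) ℂ) :
            Matrix (Fin 3) (Fin 3) ℂ) from hTA)
        have h1 : glT * glA * glT⁻¹ * glB⁻¹ = 1 := by
          rw [hu]
          group
        show (QuotientGroup.mk (glT * glA * glT⁻¹ * glB⁻¹) : PGL3C) = 1
        rw [h1]
        exact (QuotientGroup.eq_one_iff _).mpr (one_mem _)
      · -- t b t⁻¹ c⁻¹
        have hu : glT * glB = glC * glT :=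
          Units.ext (show ((glT * glB : Matrix.GeneralLinearGroup (Fin 3) ℂ) :
            Matrix (Fin 3) (Fin 3) ℂ) = ((glC * glT : Matrix.GeneralLinearGroup (Fin 3) ℂ) :
            Matrix (Fin 3) (Fin 3) ℂ) from hTB)
        have h1 : glT * glB * glT⁻¹ * glC⁻¹ = 1 := by
          rw [hu]
          group
        show (QuotientGroup.mk (glT * glB * glT⁻¹ * glC⁻¹) : PGL3C) = 1
        rw [h1]
        exact (QuotientGroup.eq_one_iff _).mpr (one_mem _)
    refine ⟨PresentedGroup.toGroup hrel, ?_, ?_, ?_, ?_⟩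
    · simpa using PresentedGroup.toGroup.of hrel (x := 0)
    · simpa using PresentedGroup.toGroup.of hrel (x := 1)
    · simpa using PresentedGroup.toGroup.of hrel (x := 2)
    · simpa using PresentedGroup.toGroup.of hrel (x := 3)
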